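/- Let p be a prime with p ≥ 5 and α a positive integer with α ≤ p - 3. If α is odd, then Σ_{1 ≤ l < 2p, l ≠ p} 1/l^α ≡ 2·Σ_{1 ≤ l < p} 1/l^α - α·p·Σ_{1 ≤ l < p} 1/l^(α+1) (mod p³), with all inverses computed in ℤ/p³ℤ. -/

import Mathlib

open Finset

lemma zmod_inv_pow {n : ℕ} {a : ZMod n} (h : IsUnit a) (m : ℕ) :
    (a ^ m)⁻¹ = a⁻¹ ^ m :=
  ZMod.inv_eq_of_mul_eq_one _ _ _
    (by rw [← mul_pow, ZMod.mul_inv_of_unit a h, one_pow])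

lemma zmod_map_inv {n m : ℕ} (f : ZMod n →+* ZMod m) {a : ZMod n} (h : IsUnit a) :
    f a⁻¹ = (f a)⁻¹ :=
  (ZMod.inv_eq_of_mul_eq_one _ _ _
    (by rw [← map_mul, ZMod.mul_inv_of_unit a h, map_one])).symm

lemma binom_cube {R : Type*} [CommRing R] (P u : R) (hP : P ^ 3 = 0) :
    ∀ a : ℕ, (u - P * u ^ 2 + P ^ 2 * u ^ 3) ^ a
      = u ^ a - a * P * u ^ (a + 1) + ((a + 1).choose 2) * P ^ 2 * u ^ (a + 2) := by
  intro a
  induction a with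
  | zero => norm_num [Nat.choose]
  | succ a ih =>
    have hc : (((a + 2).choose 2 : ℕ) : R) = ((a + 1).choose 2 : ℕ) + (a + 1) := by
      rw [Nat.choose_succ_succ (a + 1) 1, Nat.choose_one_right]
      push_cast; ring
    rw [pow_succ, ih, show a + 1 + 1 = a + 2 from rfl, hc]
    push_cast
    linear_combination ((-(a : R) - ((a + 1).choose 2 : ℕ)) * u ^ (a + 4)
      + ((a + 1).choose 2 : ℕ) * P * u ^ (a + 5)) * hP

lemma term_expand {n : ℕ} (P x : ZMod n) (hP : P ^ 3 = 0) (hx : IsUnit x) (a : ℕ) :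
    ((P + x) ^ a)⁻¹ = (x ^ a)⁻¹ - a * P * (x ^ (a + 1))⁻¹
      + ((a + 1).choose 2) * P ^ 2 * (x ^ (a + 2))⁻¹ := by
  set u := x⁻¹ with hu
  have hxu : x * u = 1 := ZMod.mul_inv_of_unit x hx
  have hmul : (P + x) * (u - P * u ^ 2 + P ^ 2 * u ^ 3) = 1 := by
    linear_combination (1 - P * u + P ^ 2 * u ^ 2) * hxu + u ^ 3 * hP
  have hPx : IsUnit (P + x) := IsUnit.of_mul_eq_one _ hmul
  have hinv : (P + x)⁻¹ = u - P * u ^ 2 + P ^ 2 * u ^ 3 :=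
    ZMod.inv_eq_of_mul_eq_one _ _ _ hmul
  rw [zmod_inv_pow hPx, hinv, binom_cube P u hP,
    zmod_inv_pow hx, zmod_inv_pow hx, zmod_inv_pow hx]

theorem stmt12 (p α : ℕ) (hp : p.Prime) (hp5 : 5 ≤ p) (hα : 1 ≤ α) (hαp : α ≤ p - 3)
    (hodd : Odd α) :
    (∑ l ∈ (Finset.Ico 1 (2 * p)).filter (fun l => l ≠ p),
      ((l : ZMod (p ^ 3)) ^ α)⁻¹) =
    2 * (∑ l ∈ Finset.Ico 1 p, ((l : ZMod (p ^ 3)) ^ α)⁻¹)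
      - (α : ZMod (p ^ 3)) * p * (∑ l ∈ Finset.Ico 1 p, ((l : ZMod (p ^ 3)) ^ (α + 1))⁻¹) := by
  haveI := Fact.mk hp
  haveI : NeZero (p ^ 3) := ⟨pow_ne_zero _ hp.pos.ne'⟩
  have hP3 : (p : ZMod (p ^ 3)) ^ 3 = 0 := by
    rw [← Nat.cast_pow, ZMod.natCast_self]
  have hα4 : α + 4 ≤ p := by
    have hpo : p % 2 = 1 := Nat.odd_iff.mp (hp.odd_of_ne_two (by omega))
    have hao : α % 2 = 1 := Nat.odd_iff.mp hodd
    omega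
  have hunit : ∀ k ∈ Finset.Ico 1 p, IsUnit ((k : ZMod (p ^ 3))) := by
    intro k hk
    rw [Finset.mem_Ico] at hk
    rw [ZMod.isUnit_iff_coprime]
    refine Nat.Coprime.pow_right _ (Nat.coprime_comm.mp (hp.coprime_iff_not_dvd.mpr ?_))
    intro hd
    have := Nat.le_of_dvd (by omega) hd
    omega
  -- split the sum
  have hsplit : (Finset.Ico 1 (2 * p)).filter (fun l => l ≠ p)
      = Finset.Ico 1 p ∪ Finset.Ico (p + 1) (2 * p) := by
    ext l
    simp only [Finset.mem_filter, Finset.mem_union, Finset.mem_Ico]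
    omega
  have hdisj : Disjoint (Finset.Ico 1 p) (Finset.Ico (p + 1) (2 * p)) := by
    rw [Finset.disjoint_left]
    intro a ha hb
    rw [Finset.mem_Ico] at ha hb
    omega
  rw [hsplit, Finset.sum_union hdisj]
  have h2 : ∑ l ∈ Finset.Ico (p + 1) (2 * p), (((l : ZMod (p ^ 3))) ^ α)⁻¹
      = ∑ k ∈ Finset.Ico 1 p, ((((p + k : ℕ)) : ZMod (p ^ 3)) ^ α)⁻¹ := by
    rw [show 2 * p = p + p by ring, show p + 1 = p + 1 from rfl,
      ← Finset.map_add_left_Ico, Finset.sum_map]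
    simp [addLeftEmbedding_apply]
  rw [h2]
  have hterm : ∀ k ∈ Finset.Ico 1 p, ((((p + k : ℕ)) : ZMod (p ^ 3)) ^ α)⁻¹
      = ((k : ZMod (p ^ 3)) ^ α)⁻¹ - (α : ZMod (p ^ 3)) * p * ((k : ZMod (p ^ 3)) ^ (α + 1))⁻¹
        + ((α + 1).choose 2) * (p : ZMod (p ^ 3)) ^ 2 * ((k : ZMod (p ^ 3)) ^ (α + 2))⁻¹ := by
    intro k hk
    have h := term_expand (p : ZMod (p ^ 3)) (k : ZMod (p ^ 3)) hP3 (hunit k hk) α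
    push_cast
    exact h
  rw [Finset.sum_congr rfl hterm]
  rw [Finset.sum_add_distrib, Finset.sum_sub_distrib, ← Finset.mul_sum, ← Finset.mul_sum]
  -- the last sum vanishes mod p, so multiplied by p^2 it is zero
  set T := ∑ k ∈ Finset.Ico 1 p, ((k : ZMod (p ^ 3)) ^ (α + 2))⁻¹ with hT
  have hpdvd : p ∣ p ^ 3 := dvd_pow_self p (by norm_num)
  have hπT : (ZMod.castHom hpdvd (ZMod p)) T = 0 := by
    rw [hT, map_sum]
    have hcong : ∀ k ∈ Finset.Ico 1 p,
        (ZMod.castHom hpdvd (ZMod p)) (((k : ZMod (p ^ 3)) ^ (α + 2))⁻¹)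
          = ((k : ZMod p)) ^ (p - (α + 3)) := by
      intro k hk
      rw [Finset.mem_Ico] at hk
      have hu := hunit k (Finset.mem_Ico.mpr hk)
      have hk0 : (k : ZMod p) ≠ 0 := by
        rw [Ne, ZMod.natCast_eq_zero_iff]
        intro hd
        have := Nat.le_of_dvd (by omega) hd
        omega
      rw [zmod_map_inv _ (hu.pow _), map_pow, map_natCast]
      refine ZMod.inv_eq_of_mul_eq_one _ _ _ ?_
      rw [← pow_add, show α + 2 + (p - (α + 3)) = p - 1 by omega,
        ZMod.pow_card_sub_one_eq_one hk0]
    rw [Finset.sum_congr rfl hcong]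
    -- now a power sum over [1, p) in ZMod p
    have h0 : ∑ k ∈ Finset.Ico 1 p, ((k : ZMod p)) ^ (p - (α + 3))
        = ∑ x ∈ (Finset.univ : Finset (ZMod p)).erase 0, x ^ (p - (α + 3)) := by
      refine Finset.sum_bij' (fun k _ => (k : ZMod p)) (fun x _ => x.val) ?_ ?_ ?_ ?_ ?_
      · intro k hk
        rw [Finset.mem_Ico] at hk
        refine Finset.mem_erase.mpr ⟨?_, Finset.mem_univ _⟩
        rw [Ne, ZMod.natCast_eq_zero_iff]
        intro hd
        have := Nat.le_of_dvd (by omega) hd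
        omega
      · intro x hx
        rw [Finset.mem_erase] at hx
        rw [Finset.mem_Ico]
        have h1 : x.val < p := ZMod.val_lt x
        have h2 : x.val ≠ 0 := fun h => hx.1 (by rwa [← ZMod.val_eq_zero])
        show 1 ≤ x.val ∧ x.val < p
        omega
      · intro k hk
        rw [Finset.mem_Ico] at hk
        exact ZMod.val_cast_of_lt hk.2
      · intro x hx
        exact ZMod.natCast_zmod_val x
      · intro k hk
        rfl
    rw [h0, Finset.sum_erase _ (by rw [zero_pow (by omega)]),
      FiniteField.sum_pow_lt_card_sub_one]
    rw [ZMod.card]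
    omega
  have hpT : (p : ZMod (p ^ 3)) ^ 2 * T = 0 := by
    have hval : ((T.val : ℕ) : ZMod p) = 0 := by
      rw [ZMod.natCast_val, ← ZMod.castHom_apply (h := hpdvd), hπT]
    obtain ⟨m, hm⟩ := (ZMod.natCast_eq_zero_iff _ _).mp hval
    have hTv : ((T.val : ℕ) : ZMod (p ^ 3)) = T := ZMod.natCast_zmod_val T
    have hTm : T = (p : ZMod (p ^ 3)) * (m : ℕ) := by
      rw [← hTv, hm]
      push_cast
      ring
    linear_combination (p : ZMod (p ^ 3)) ^ 2 * hTm + (m : ZMod (p ^ 3)) * hP3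
  have hz : ((α + 1).choose 2 : ZMod (p ^ 3)) * ((p : ZMod (p ^ 3)) ^ 2 * T) = 0 := by
    rw [hpT, mul_zero]
  linear_combination hz
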